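/- Let D be a dyadic grid on ℝ^d, let m,n ∈ ℤ_{≥0}, and for each Q ∈ D and each pair of subcubes Q', Q'' ⊂ Q with ℓ(Q') = 2^{-m}ℓ(Q), ℓ(Q'') = 2^{-n}ℓ(Q), let h_{Q'}^{Q''} and h_{Q''}^{Q'} be Haar functions (constant on children, supported on Q' resp. Q'') with ‖h_{Q'}^{Q''} h_{Q''}^{Q'}‖_∞ ≤ 1. Then for all x ≠ y, |Σ_{Q ∈ D} (1/|Q|) Σ_{Q',Q''⊂Q}^{(m,n)} h_{Q'}^{Q''}(x) h_{Q''}^{Q'}(y)| ≤ C(d)/|x − y|^d. -/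

import Mathlib

noncomputable section
open MeasureTheory Metric Set

abbrev Pt (d : ℕ) := EuclideanSpace ℝ (Fin d)

/-- The half-open axis-parallel cube with lower-left corner `c` and side length `2^k`. -/
def dyadicCube {d : ℕ} (c : Pt d) (k : ℤ) : Set (Pt d) :=
  {x | ∀ i, c i ≤ x i ∧ x i < c i + (2 : ℝ) ^ k}

/-- A dyadic grid on `ℝ^d`, described by the corners of its cubes at each scale: the cubes of
each scale `2^k` partition `ℝ^d`, and each cube of scale `2^{k-1}` is contained in a cube of
scale `2^k` (hence every cube is the disjoint union of its `2^d` children). -/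
structure DyadicGrid (d : ℕ) where
  corners : ℤ → Set (Pt d)
  partition : ∀ (k : ℤ) (x : Pt d), ∃! c, c ∈ corners k ∧ x ∈ dyadicCube c k
  nested : ∀ (k : ℤ), ∀ c' ∈ corners (k - 1),
    ∃ c ∈ corners k, dyadicCube c' (k - 1) ⊆ dyadicCube c k

/-- `h` is a (generalized) Haar function associated with the cube of corner `c` and scale
`2^k` of the grid with corner sets `corners`: `h` vanishes outside the cube and is constant
on each of its children. -/
def IsHaarOn {d : ℕ} (corners : ℤ → Set (Pt d)) (c : Pt d) (k : ℤ) (h : Pt d → ℝ) : Prop :=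
  (∀ x, x ∉ dyadicCube c k → h x = 0) ∧
  ∀ c' ∈ corners (k - 1), dyadicCube c' (k - 1) ⊆ dyadicCube c k →
    ∀ x ∈ dyadicCube c' (k - 1), ∀ y ∈ dyadicCube c' (k - 1), h x = h y


/-- Index set of the Haar shift kernel sum of complexity `(m,n)`: a scale `k` together with
corners of cubes `Q ∈ D` of scale `k`, `Q' ⊆ Q` of scale `k - m` and `Q'' ⊆ Q` of scale
`k - n`. -/
def ShiftIdx {d : ℕ} (D : DyadicGrid d) (m n : ℕ) : Type :=
  {q : ℤ × Pt d × Pt d × Pt d //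
    q.2.1 ∈ D.corners q.1 ∧
    q.2.2.1 ∈ D.corners (q.1 - m) ∧
    q.2.2.2 ∈ D.corners (q.1 - n) ∧
    dyadicCube q.2.2.1 (q.1 - m) ⊆ dyadicCube q.2.1 q.1 ∧
    dyadicCube q.2.2.2 (q.1 - n) ⊆ dyadicCube q.2.1 q.1}

namespace HaarShiftAux

/-- Uniqueness of the cube of a given scale containing a given point. -/
lemma cube_unique {d : ℕ} (D : DyadicGrid d) {k : ℤ} {c₁ c₂ x : Pt d}
    (h₁ : c₁ ∈ D.corners k) (h₂ : c₂ ∈ D.corners k)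
    (hx₁ : x ∈ dyadicCube c₁ k) (hx₂ : x ∈ dyadicCube c₂ k) : c₁ = c₂ := by
  obtain ⟨c, -, hu⟩ := D.partition k x
  rw [hu c₁ ⟨h₁, hx₁⟩, hu c₂ ⟨h₂, hx₂⟩]

/-- If two dyadic cubes contain a common point, the smaller is contained in the larger. -/
lemma cube_nested {d : ℕ} (D : DyadicGrid d) (j : ℕ) :
    ∀ (k : ℤ) (c c' x : Pt d), c ∈ D.corners k → c' ∈ D.corners (k - j) →
      x ∈ dyadicCube c k → x ∈ dyadicCube c' (k - j) →
      dyadicCube c' (k - j) ⊆ dyadicCube c k := by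
  induction j with
  | zero =>
      intro k c c' x hc hc' hx hx'
      simp only [Nat.cast_zero, sub_zero] at hc' hx' ⊢
      rw [cube_unique D hc' hc hx' hx]
  | succ j ih =>
      intro k c c' x hc hc' hx hx'
      have hcast : k - ((j + 1 : ℕ) : ℤ) = (k - j) - 1 := by push_cast; ring
      rw [hcast] at hc' hx' ⊢
      obtain ⟨c₁, hc₁, hsub⟩ := D.nested (k - j) c' hc'
      exact hsub.trans (ih k c c₁ x hc hc₁ hx (hsub hx'))

/-- Points of a cube of scale `2^k` are at distance at most `√d · 2^k`. -/
lemma dist_le_cube {d : ℕ} {k : ℤ} {c : Pt d} {u v : Pt d}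
    (hu : u ∈ dyadicCube c k) (hv : v ∈ dyadicCube c k) :
    dist u v ≤ Real.sqrt d * 2 ^ k := by
  have h2k : (0 : ℝ) < 2 ^ k := by positivity
  rw [EuclideanSpace.dist_eq]
  have h1 : ∑ i, dist (u i) (v i) ^ 2 ≤ (d : ℝ) * ((2 : ℝ) ^ k) ^ 2 := by
    have hb : ∀ i : Fin d, dist (u i) (v i) ^ 2 ≤ ((2 : ℝ) ^ k) ^ 2 := by
      intro i
      have hui := hu i
      have hvi := hv i
      rw [Real.dist_eq]
      have habs : |u i - v i| ≤ (2 : ℝ) ^ k := by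
        rw [abs_le]
        constructor <;> [linarith [hui.1, hui.2, hvi.1, hvi.2];
          linarith [hui.1, hui.2, hvi.1, hvi.2]]
      exact pow_le_pow_left₀ (abs_nonneg _) habs 2
    calc ∑ i, dist (u i) (v i) ^ 2 ≤ ∑ _i : Fin d, ((2 : ℝ) ^ k) ^ 2 :=
          Finset.sum_le_sum fun i _ => hb i
      _ = (d : ℝ) * ((2 : ℝ) ^ k) ^ 2 := by
          simp [Finset.sum_const, Finset.card_univ, mul_comm]
  calc Real.sqrt (∑ i, dist (u i) (v i) ^ 2) ≤ Real.sqrt ((d : ℝ) * ((2 : ℝ) ^ k) ^ 2) :=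
        Real.sqrt_le_sqrt h1
    _ = Real.sqrt d * 2 ^ k := by
        rw [Real.sqrt_mul (by positivity), Real.sqrt_sq h2k.le]

end HaarShiftAux

open HaarShiftAux in
/-- Size bound for the Haar shift kernel: if for every cube `Q ∈ D` and subcubes
`Q', Q'' ⊆ Q` of side lengths `2^{-m}ℓ(Q)`, `2^{-n}ℓ(Q)` we are given Haar functions
`H` (on `Q'`) and `G` (on `Q''`) with `‖H·G‖_∞ ≤ 1`, then for `x ≠ y`,
`|Σ_{Q ∈ D} |Q|⁻¹ Σ_{Q',Q'' ⊆ Q} H(x)·G(y)| ≤ C(d)/|x − y|^d`. -/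
theorem haar_shift_kernel_bound (d : ℕ) :
    ∃ C : ℝ, 0 < C ∧
      ∀ (D : DyadicGrid d) (m n : ℕ)
        (H G : ℤ → Pt d → Pt d → Pt d → (Pt d → ℝ)),
        (∀ (k : ℤ) (c c' c'' : Pt d), c ∈ D.corners k → c' ∈ D.corners (k - m) →
          c'' ∈ D.corners (k - n) → dyadicCube c' (k - m) ⊆ dyadicCube c k →
          dyadicCube c'' (k - n) ⊆ dyadicCube c k →
            IsHaarOn D.corners c' (k - m) (H k c c' c'') ∧
            IsHaarOn D.corners c'' (k - n) (G k c c' c'') ∧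
            ∀ u v : Pt d, |H k c c' c'' u * G k c c' c'' v| ≤ 1) →
        ∀ x y : Pt d, x ≠ y →
          Summable (fun q : ShiftIdx D m n =>
            ((2 : ℝ) ^ (q.1.1 * (d : ℤ)))⁻¹ *
              H q.1.1 q.1.2.1 q.1.2.2.1 q.1.2.2.2 x * G q.1.1 q.1.2.1 q.1.2.2.1 q.1.2.2.2 y) ∧
          |∑' q : ShiftIdx D m n,
              ((2 : ℝ) ^ (q.1.1 * (d : ℤ)))⁻¹ *
                H q.1.1 q.1.2.1 q.1.2.2.1 q.1.2.2.2 x *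
                G q.1.1 q.1.2.1 q.1.2.2.1 q.1.2.2.2 y| ≤
            C / dist x y ^ d := by
  refine ⟨2 * Real.sqrt d ^ d + 1, by positivity, ?_⟩
  intro D m n H G hHG x y hxy
  -- the degenerate case `d = 0` is vacuous
  rcases Nat.eq_zero_or_pos d with hd0 | hd
  · exact absurd (by subst hd0; ext i; exact i.elim0) hxy
  have hdist : (0 : ℝ) < dist x y := dist_pos.2 hxy
  have hsqrt : (0 : ℝ) < Real.sqrt d := Real.sqrt_pos.2 (by exact_mod_cast hd)
  set f : ShiftIdx D m n → ℝ := fun q =>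
    ((2 : ℝ) ^ (q.1.1 * (d : ℤ)))⁻¹ *
      H q.1.1 q.1.2.1 q.1.2.2.1 q.1.2.2.2 x * G q.1.1 q.1.2.1 q.1.2.2.1 q.1.2.2.2 y with hf
  set k₀ : ℤ := Int.clog 2 (dist x y / Real.sqrt d) with hk₀
  set g : ℤ → ℝ := fun k => if k₀ ≤ k then ((2 : ℝ) ^ (k * (d : ℤ)))⁻¹ else 0 with hg
  have hgnonneg : ∀ k, 0 ≤ g k := by
    intro k; rw [hg]; dsimp only; split <;> positivity
  -- key pointwise facts about nonvanishing terms
  have key : ∀ q : ShiftIdx D m n, f q ≠ 0 →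
      x ∈ dyadicCube q.1.2.2.1 (q.1.1 - m) ∧ y ∈ dyadicCube q.1.2.2.2 (q.1.1 - n) ∧
        x ∈ dyadicCube q.1.2.1 q.1.1 ∧ y ∈ dyadicCube q.1.2.1 q.1.1 := by
    rintro ⟨⟨k, c, c', c''⟩, hc, hc', hc'', hs', hs''⟩ hne
    obtain ⟨hH, hG, -⟩ := hHG k c c' c'' hc hc' hc'' hs' hs''
    have hHx : H k c c' c'' x ≠ 0 := fun h => hne (by simp [hf, h])
    have hGy : G k c c' c'' y ≠ 0 := fun h => hne (by simp [hf, h])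
    have hx' : x ∈ dyadicCube c' (k - m) := by
      by_contra hx; exact hHx (hH.1 x hx)
    have hy'' : y ∈ dyadicCube c'' (k - n) := by
      by_contra hy; exact hGy (hG.1 y hy)
    exact ⟨hx', hy'', hs' hx', hs'' hy''⟩
  have keyk : ∀ q : ShiftIdx D m n, f q ≠ 0 → k₀ ≤ q.1.1 := by
    intro q hne
    obtain ⟨-, -, hx, hy⟩ := key q hne
    have hd1 : dist x y ≤ Real.sqrt d * 2 ^ q.1.1 := dist_le_cube hx hy
    have hr : dist x y / Real.sqrt d ≤ (2 : ℝ) ^ q.1.1 := by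
      rw [div_le_iff₀ hsqrt]; linarith [hd1]
    have : Int.clog 2 (dist x y / Real.sqrt d) ≤ Int.clog 2 ((2 : ℝ) ^ q.1.1) :=
      Int.clog_mono_right (by positivity) hr
    rwa [show ((2 : ℝ) ^ q.1.1) = ((2 : ℕ) : ℝ) ^ q.1.1 by norm_num,
      Int.clog_zpow (by norm_num)] at this
  -- the scale map is injective on the support of `f`
  have hj : Function.Injective (fun s : Function.support f => s.1.1.1) := by
    rintro ⟨⟨⟨k₁, c₁, c₁', c₁''⟩, p₁⟩, hne₁⟩ ⟨⟨⟨k₂, c₂, c₂', c₂''⟩, p₂⟩, hne₂⟩ hk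
    simp only at hk
    subst hk
    obtain ⟨hx₁', hy₁'', hx₁, -⟩ := key _ hne₁
    obtain ⟨hx₂', hy₂'', hx₂, -⟩ := key _ hne₂
    have e1 : c₁ = c₂ := cube_unique D p₁.1 p₂.1 hx₁ hx₂
    have e2 : c₁' = c₂' := cube_unique D p₁.2.1 p₂.2.1 hx₁' hx₂'
    have e3 : c₁'' = c₂'' := cube_unique D p₁.2.2.1 p₂.2.2.1 hy₁'' hy₂''
    subst e1; subst e2; subst e3
    rfl
  -- pointwise bound of `f` on its support by `g`
  have hbound : ∀ s : Function.support f, ‖f s.1‖ ≤ g s.1.1.1 := by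
    rintro ⟨⟨⟨k, c, c', c''⟩, hc, hc', hc'', hs', hs''⟩, hne⟩
    obtain ⟨-, -, hprod⟩ := hHG k c c' c'' hc hc' hc'' hs' hs''
    have hk : k₀ ≤ k := keyk _ hne
    have h2 : (0 : ℝ) < (2 : ℝ) ^ (k * (d : ℤ)) := by positivity
    simp only [hg, if_pos hk]
    calc ‖f ⟨(k, c, c', c''), hc, hc', hc'', hs', hs''⟩‖
        = ((2 : ℝ) ^ (k * (d : ℤ)))⁻¹ * |H k c c' c'' x * G k c c' c'' y| := by
          rw [hf]
          simp only [Real.norm_eq_abs, mul_assoc, abs_mul, abs_inv, abs_of_pos h2]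
      _ ≤ ((2 : ℝ) ^ (k * (d : ℤ)))⁻¹ * 1 := by
          exact mul_le_mul_of_nonneg_left (hprod x y) (by positivity)
      _ = ((2 : ℝ) ^ (k * (d : ℤ)))⁻¹ := mul_one _
  -- summability of `g` over `ℤ` and the value of its sum
  set r : ℝ := ((2 : ℝ) ^ d)⁻¹ with hr
  have hr0 : 0 ≤ r := by positivity
  have hr1 : r < 1 := by
    rw [hr, inv_lt_one_iff₀]
    right
    exact one_lt_pow₀ (by norm_num) (by omega)
  have he : Function.Injective (fun i : ℕ => k₀ + (i : ℤ)) := fun a b hab => by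
    simpa using hab
  have hge : ∀ i : ℕ, g (k₀ + (i : ℤ)) = ((2 : ℝ) ^ (k₀ * (d : ℤ)))⁻¹ * r ^ i := by
    intro i
    rw [hg]
    simp only [if_pos (by omega : k₀ ≤ k₀ + (i : ℤ))]
    rw [hr, inv_pow, ← pow_mul, ← zpow_natCast (2 : ℝ) (d * i), ← mul_inv,
      ← zpow_add₀ (by norm_num : (2 : ℝ) ≠ 0)]
    congr 1
    push_cast
    ring
  have hgsupp : ∀ k, k ∉ Set.range (fun i : ℕ => k₀ + (i : ℤ)) → g k = 0 := by
    intro k hk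
    rw [hg]
    refine if_neg fun hle => hk ?_
    obtain ⟨i, hi⟩ := Int.le.dest hle
    exact ⟨i, hi⟩
  have hsumge : Summable (fun i : ℕ => g (k₀ + (i : ℤ))) := by
    simp only [hge]
    exact (summable_geometric_of_lt_one hr0 hr1).mul_left _
  have hgsummable : Summable g := (he.summable_iff hgsupp).1 hsumge
  have hgsum : ∑' k : ℤ, g k = ((2 : ℝ) ^ (k₀ * (d : ℤ)))⁻¹ * (1 - r)⁻¹ := by
    rw [← he.tsum_eq (Function.support_subset_iff'.2 hgsupp)]
    simp only [hge]
    rw [tsum_mul_left, tsum_geometric_of_lt_one hr0 hr1]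
  -- summability of `f`
  have hval : ∀ q, q ∉ Set.range (Subtype.val : Function.support f → ShiftIdx D m n) →
      f q = 0 := by
    intro q hq
    rw [Subtype.range_coe] at hq
    exact Function.notMem_support.1 hq
  have hsumS : Summable (f ∘ (Subtype.val : Function.support f → ShiftIdx D m n)) :=
    Summable.of_norm_bounded (hgsummable.comp_injective hj) hbound
  have hsummable : Summable f := (Subtype.val_injective.summable_iff hval).1 hsumS
  refine ⟨hsummable, ?_⟩
  -- bound the sum
  have hnormsum : Summable fun s : Function.support f => ‖f s.1‖ :=
    Summable.of_nonneg_of_le (fun _ => norm_nonneg _) hbound (hgsummable.comp_injective hj)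
  have step1 : |∑' q, f q| ≤ ∑' s : Function.support f, ‖f s.1‖ := by
    rw [← Subtype.val_injective.tsum_eq (Function.support_subset_iff'.2 hval)]
    exact norm_tsum_le_tsum_norm hnormsum
  have step2 : ∑' s : Function.support f, ‖f s.1‖ ≤ ∑' k : ℤ, g k :=
    Summable.tsum_le_tsum_of_inj _ hj (fun k _ => hgnonneg k) hbound hnormsum hgsummable
  -- arithmetic: the geometric sum is bounded by `2 √d^d / dist^d`
  have hclog : dist x y / Real.sqrt d ≤ (2 : ℝ) ^ k₀ := by
    have := Int.self_le_zpow_clog (R := ℝ) (b := 2) (by norm_num) (dist x y / Real.sqrt d)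
    rwa [show (((2 : ℕ)) : ℝ) = (2 : ℝ) by norm_num] at this
  have h2k₀ : (0 : ℝ) < (2 : ℝ) ^ k₀ := by positivity
  have hinv : ((2 : ℝ) ^ k₀)⁻¹ ≤ Real.sqrt d / dist x y := by
    rw [inv_le_iff_one_le_mul₀ h2k₀]
    rw [div_le_iff₀ hsqrt] at hclog
    rw [div_mul_eq_mul_div, le_div_iff₀ hdist]
    nlinarith [hclog]
  have hpow : ((2 : ℝ) ^ (k₀ * (d : ℤ)))⁻¹ ≤ Real.sqrt d ^ d / dist x y ^ d := by
    have : ((2 : ℝ) ^ (k₀ * (d : ℤ)))⁻¹ = (((2 : ℝ) ^ k₀)⁻¹) ^ d := by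
      rw [zpow_mul, zpow_natCast, inv_pow]
    rw [this, ← div_pow]
    exact pow_le_pow_left₀ (by positivity) hinv d
  have hrle : (1 - r)⁻¹ ≤ 2 := by
    have h2d : (2 : ℝ) ≤ (2 : ℝ) ^ d := by
      calc (2:ℝ) = 2 ^ 1 := (pow_one 2).symm
        _ ≤ 2 ^ d := pow_le_pow_right₀ (by norm_num) (by omega)
    have hrhalf : r ≤ 1 / 2 := by
      rw [hr]
      rw [inv_le_comm₀ (by positivity) (by norm_num)]
      linarith
    rw [inv_le_comm₀ (by linarith) (by norm_num)]
    linarith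
  calc |∑' q, f q| ≤ ∑' k : ℤ, g k := step1.trans step2
    _ = ((2 : ℝ) ^ (k₀ * (d : ℤ)))⁻¹ * (1 - r)⁻¹ := hgsum
    _ ≤ (Real.sqrt d ^ d / dist x y ^ d) * 2 := by
        exact mul_le_mul hpow hrle (inv_nonneg.2 (by linarith)) (by positivity)
    _ ≤ (2 * Real.sqrt d ^ d + 1) / dist x y ^ d := by
        rw [div_mul_eq_mul_div]
        gcongr
        linarith
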